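/- arXiv:2407.13582 — 2 statements merged into one kernel-verified Lean document; each statement's English description precedes it below -/
import Mathlib

section
/- Let P_1, P_2 ∈ 𝒫_2(ℝ^d) be continuous distributions (assigning zero probability to every set of Hausdorff dimension less than d), let λ ∈ [0,1], and let π* be an optimal coupling of P_1 and P_2 for the quadratic cost ‖ξ_1−ξ_2‖²₂. Define T_λ : ℝ^d×ℝ^d → ℝ^d by T_λ(ξ_1,ξ_2) = λξ_1 + (1−λ)ξ_2. Then the pushforward (T_λ)_#π* is a 2-Wasserstein barycenter of P_1 and P_2 with weights λ and 1−λ; that is, (T_λ)_#π* minimizes λ·W_2(P,P_1)² + (1−λ)·W_2(P,P_2)² over P ∈ 𝒫_2(ℝ^d). -/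
open MeasureTheory ENNReal Set ProbabilityTheory RealInnerProductSpace

noncomputable section

/-- Euclidean space `ℝ^d`. -/
abbrev Eucl (d : ℕ) : Type := EuclideanSpace ℝ (Fin d)

/-- `π` is a coupling of the probability measures `P` and `Q`. -/
def IsCoupling {X : Type*} [MeasurableSpace X]
    (π : Measure (X × X)) (P Q : Measure X) : Prop :=
  IsProbabilityMeasure π ∧ π.map Prod.fst = P ∧ π.map Prod.snd = Q

/-- The quadratic transport cost of a coupling. -/
def QuadCost {d : ℕ} (π : Measure (Eucl d × Eucl d)) : ℝ≥0∞ :=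
  ∫⁻ q, ENNReal.ofReal (‖q.1 - q.2‖ ^ 2) ∂π

/-- Squared 2-Wasserstein distance `W₂(P,Q)²` (the OT cost for the quadratic cost). -/
def W2sq {d : ℕ} (P Q : Measure (Eucl d)) : ℝ≥0∞ :=
  ⨅ π ∈ {π : Measure (Eucl d × Eucl d) | IsCoupling π P Q}, QuadCost π

/-- `P ∈ 𝒫₂(ℝ^d)`: a Borel probability measure with finite second moment. -/
def MemP2 {d : ℕ} (P : Measure (Eucl d)) : Prop :=
  IsProbabilityMeasure P ∧ ∫⁻ ξ, ENNReal.ofReal (‖ξ‖ ^ 2) ∂P < ⊤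

-- measurability of the cost
lemma meas_cost {d : ℕ} :
    Measurable (fun q : Eucl d × Eucl d => ENNReal.ofReal (‖q.1 - q.2‖ ^ 2)) :=
  (((measurable_fst.sub measurable_snd).norm).pow_const 2).ennreal_ofReal

-- pointwise parallelogram-type inequality
lemma point_ineq {d : ℕ} {lam : ℝ} (h0 : 0 ≤ lam) (h1 : lam ≤ 1) (x a b : Eucl d) :
    lam * (1 - lam) * ‖a - b‖ ^ 2 ≤ lam * ‖x - a‖ ^ 2 + (1 - lam) * ‖x - b‖ ^ 2 := by
  set u := x - a with hu
  set v := x - b with hv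
  have hab : a - b = v - u := by rw [hu, hv]; abel
  have key : (0:ℝ) ≤ ‖lam • u + (1 - lam) • v‖ ^ 2 := sq_nonneg _
  have expand : ‖lam • u + (1 - lam) • v‖ ^ 2
      = lam ^ 2 * ‖u‖ ^ 2 + 2 * (lam * (1 - lam) * (inner ℝ u v)) + (1 - lam) ^ 2 * ‖v‖ ^ 2 := by
    rw [norm_add_sq_real, real_inner_smul_left, real_inner_smul_right,
      norm_smul, norm_smul, mul_pow, mul_pow, Real.norm_eq_abs, Real.norm_eq_abs,
      sq_abs, sq_abs]
    ring
  have expand2 : ‖v - u‖ ^ 2 = ‖v‖ ^ 2 - 2 * (inner ℝ v u) + ‖u‖ ^ 2 := norm_sub_sq_real v u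
  have hc : (inner ℝ v u) = (inner ℝ u v) := real_inner_comm u v
  rw [hab]
  nlinarith [key, expand, expand2]

-- marginal lintegrals
lemma lintegral_fst_of_coupling {d : ℕ} {P Q : Measure (Eucl d)}
    {π : Measure (Eucl d × Eucl d)} (hπ : IsCoupling π P Q)
    {f : Eucl d → ℝ≥0∞} (hf : Measurable f) :
    ∫⁻ q, f q.1 ∂π = ∫⁻ x, f x ∂P := by
  rw [← hπ.2.1, lintegral_map hf measurable_fst]

lemma lintegral_snd_of_coupling {d : ℕ} {P Q : Measure (Eucl d)}
    {π : Measure (Eucl d × Eucl d)} (hπ : IsCoupling π P Q)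
    {f : Eucl d → ℝ≥0∞} (hf : Measurable f) :
    ∫⁻ q, f q.2 ∂π = ∫⁻ x, f x ∂Q := by
  rw [← hπ.2.2, lintegral_map hf measurable_snd]

-- finiteness of quadratic cost for couplings with finite second moments
lemma quadCost_lt_top {d : ℕ} {P Q : Measure (Eucl d)} {π : Measure (Eucl d × Eucl d)}
    (hπ : IsCoupling π P Q)
    (hP : ∫⁻ ξ, ENNReal.ofReal (‖ξ‖ ^ 2) ∂P < ⊤)
    (hQ : ∫⁻ ξ, ENNReal.ofReal (‖ξ‖ ^ 2) ∂Q < ⊤) :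
    QuadCost π < ⊤ := by
  have hmono : QuadCost π ≤
      ∫⁻ q : Eucl d × Eucl d, (2 * ENNReal.ofReal (‖q.1‖ ^ 2) + 2 * ENNReal.ofReal (‖q.2‖ ^ 2)) ∂π := by
    refine lintegral_mono fun q => ?_
    have h1 : ‖q.1 - q.2‖ ^ 2 ≤ 2 * ‖q.1‖ ^ 2 + 2 * ‖q.2‖ ^ 2 := by
      have := norm_sub_le q.1 q.2
      nlinarith [norm_nonneg q.1, norm_nonneg q.2, norm_nonneg (q.1 - q.2), sq_nonneg (‖q.1‖ - ‖q.2‖)]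
    calc ENNReal.ofReal (‖q.1 - q.2‖ ^ 2)
        ≤ ENNReal.ofReal (2 * ‖q.1‖ ^ 2 + 2 * ‖q.2‖ ^ 2) := ENNReal.ofReal_le_ofReal h1
      _ = ENNReal.ofReal (2 * ‖q.1‖ ^ 2) + ENNReal.ofReal (2 * ‖q.2‖ ^ 2) :=
          ENNReal.ofReal_add (by positivity) (by positivity)
      _ = 2 * ENNReal.ofReal (‖q.1‖ ^ 2) + 2 * ENNReal.ofReal (‖q.2‖ ^ 2) := by
          rw [ENNReal.ofReal_mul (by norm_num), ENNReal.ofReal_mul (by norm_num)]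
          norm_num
  have hmeas1 : Measurable (fun q : Eucl d × Eucl d => 2 * ENNReal.ofReal (‖q.1‖ ^ 2)) :=
    ((measurable_fst.norm.pow_const 2).ennreal_ofReal).const_mul 2
  have hmeas2 : Measurable (fun q : Eucl d × Eucl d => 2 * ENNReal.ofReal (‖q.2‖ ^ 2)) :=
    ((measurable_snd.norm.pow_const 2).ennreal_ofReal).const_mul 2
  have hsplit : ∫⁻ q : Eucl d × Eucl d,
      (2 * ENNReal.ofReal (‖q.1‖ ^ 2) + 2 * ENNReal.ofReal (‖q.2‖ ^ 2)) ∂π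
      = 2 * (∫⁻ ξ, ENNReal.ofReal (‖ξ‖ ^ 2) ∂P) + 2 * (∫⁻ ξ, ENNReal.ofReal (‖ξ‖ ^ 2) ∂Q) := by
    rw [lintegral_add_left hmeas1]
    rw [lintegral_const_mul _ ((measurable_fst.norm.pow_const 2).ennreal_ofReal)]
    rw [lintegral_const_mul _ ((measurable_snd.norm.pow_const 2).ennreal_ofReal)]
    rw [lintegral_fst_of_coupling hπ ((measurable_norm.pow_const 2).ennreal_ofReal),
      lintegral_snd_of_coupling hπ ((measurable_norm.pow_const 2).ennreal_ofReal)]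
  refine lt_of_le_of_lt (hmono.trans hsplit.le) ?_
  exact ENNReal.add_lt_top.2 ⟨ENNReal.mul_lt_top ENNReal.ofNat_lt_top hP,
    ENNReal.mul_lt_top ENNReal.ofNat_lt_top hQ⟩

-- the ENNReal infimum lemma
lemma le_mul_iInf_add_mul_iInf {ι κ : Type*} [Nonempty ι] [Nonempty κ]
    {a b c : ℝ≥0∞} (ha : a ≠ ⊤) (hb : b ≠ ⊤)
    {f : ι → ℝ≥0∞} {g : κ → ℝ≥0∞} (h : ∀ i j, c ≤ a * f i + b * g j) :
    c ≤ a * (⨅ i, f i) + b * ⨅ j, g j := by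
  have h1 : a * ⨅ i, f i = ⨅ i, a * f i := ENNReal.mul_iInf (fun h' => absurd h' ha)
  have h2 : b * ⨅ j, g j = ⨅ j, b * g j := ENNReal.mul_iInf (fun h' => absurd h' hb)
  simp only [h1, h2, ENNReal.iInf_add]
  refine le_iInf fun i => ?_
  rw [ENNReal.add_iInf]
  exact le_iInf fun j => h i j

-- gluing lemma
lemma glue {d : ℕ} {P P₁ P₂ : Measure (Eucl d)} [IsProbabilityMeasure P]
    (γ₁ γ₂ : Measure (Eucl d × Eucl d))
    (h₁ : IsCoupling γ₁ P P₁) (h₂ : IsCoupling γ₂ P P₂) :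
    ∃ μ : Measure (Eucl d × Eucl d × Eucl d),
      IsProbabilityMeasure μ ∧
      μ.map (fun p => (p.1, p.2.1)) = γ₁ ∧
      μ.map (fun p => (p.1, p.2.2)) = γ₂ := by
  haveI : IsProbabilityMeasure γ₁ := h₁.1
  haveI : IsProbabilityMeasure γ₂ := h₂.1
  set κ₁ := γ₁.condKernel with hκ₁
  set κ₂ := γ₂.condKernel with hκ₂
  have hfst₁ : γ₁.fst = P := h₁.2.1
  have hfst₂ : γ₂.fst = P := h₂.2.1
  refine ⟨P ⊗ₘ (κ₁ ×ₖ κ₂), inferInstance, ?_, ?_⟩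
  · have hm : Measurable (fun p : Eucl d × Eucl d × Eucl d => (p.1, p.2.1)) :=
      measurable_fst.prodMk (measurable_snd.fst)
    ext s hs
    rw [Measure.map_apply hm hs, Measure.compProd_apply (hm hs)]
    have hγ : γ₁ = P ⊗ₘ κ₁ := by rw [hκ₁, ← hfst₁, γ₁.disintegrate γ₁.condKernel]
    rw [hγ, Measure.compProd_apply hs]
    refine lintegral_congr fun x => ?_
    have hset : (Prod.mk x ⁻¹' ((fun p : Eucl d × Eucl d × Eucl d => (p.1, p.2.1)) ⁻¹' s))
        = Prod.fst ⁻¹' (Prod.mk x ⁻¹' s) := rfl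
    rw [hset, Kernel.prod_apply]
    have : ((κ₁ x).prod (κ₂ x)) (Prod.fst ⁻¹' (Prod.mk x ⁻¹' s))
        = ((κ₁ x).prod (κ₂ x)).fst (Prod.mk x ⁻¹' s) := by
      rw [Measure.fst_apply (measurable_prodMk_left hs)]
    rw [this, Measure.fst_prod]
  · have hm : Measurable (fun p : Eucl d × Eucl d × Eucl d => (p.1, p.2.2)) :=
      measurable_fst.prodMk (measurable_snd.snd)
    ext s hs
    rw [Measure.map_apply hm hs, Measure.compProd_apply (hm hs)]
    have hγ : γ₂ = P ⊗ₘ κ₂ := by rw [hκ₂, ← hfst₂, γ₂.disintegrate γ₂.condKernel]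
    rw [hγ, Measure.compProd_apply hs]
    refine lintegral_congr fun x => ?_
    have hset : (Prod.mk x ⁻¹' ((fun p : Eucl d × Eucl d × Eucl d => (p.1, p.2.2)) ⁻¹' s))
        = Prod.snd ⁻¹' (Prod.mk x ⁻¹' s) := rfl
    rw [hset, Kernel.prod_apply]
    have : ((κ₁ x).prod (κ₂ x)) (Prod.snd ⁻¹' (Prod.mk x ⁻¹' s))
        = ((κ₁ x).prod (κ₂ x)).snd (Prod.mk x ⁻¹' s) := by
      rw [Measure.snd_apply (measurable_prodMk_left hs)]
    rw [this, Measure.snd_prod]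

lemma lintegral_pair_bound {d : ℕ} {P Q : Measure (Eucl d)} {π : Measure (Eucl d × Eucl d)}
    (hπ : IsCoupling π P Q) {F : Eucl d × Eucl d → ℝ≥0∞}
    (hpt : ∀ q, F q ≤ 2 * ENNReal.ofReal (‖q.1‖ ^ 2) + 2 * ENNReal.ofReal (‖q.2‖ ^ 2)) :
    ∫⁻ q, F q ∂π ≤ 2 * (∫⁻ ξ, ENNReal.ofReal (‖ξ‖ ^ 2) ∂P)
      + 2 * (∫⁻ ξ, ENNReal.ofReal (‖ξ‖ ^ 2) ∂Q) := by
  have hmeas1 : Measurable (fun q : Eucl d × Eucl d => 2 * ENNReal.ofReal (‖q.1‖ ^ 2)) :=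
    ((measurable_fst.norm.pow_const 2).ennreal_ofReal).const_mul 2
  calc ∫⁻ q, F q ∂π
      ≤ ∫⁻ q : Eucl d × Eucl d,
          (2 * ENNReal.ofReal (‖q.1‖ ^ 2) + 2 * ENNReal.ofReal (‖q.2‖ ^ 2)) ∂π :=
        lintegral_mono hpt
    _ = 2 * (∫⁻ ξ, ENNReal.ofReal (‖ξ‖ ^ 2) ∂P) + 2 * (∫⁻ ξ, ENNReal.ofReal (‖ξ‖ ^ 2) ∂Q) := by
        rw [lintegral_add_left hmeas1,
          lintegral_const_mul _ ((measurable_fst.norm.pow_const 2).ennreal_ofReal),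
          lintegral_const_mul _ ((measurable_snd.norm.pow_const 2).ennreal_ofReal),
          lintegral_fst_of_coupling hπ ((measurable_norm.pow_const 2).ennreal_ofReal),
          lintegral_snd_of_coupling hπ ((measurable_norm.pow_const 2).ennreal_ofReal)]

/-- **2-Wasserstein barycenters trace out geodesics.** -/
theorem wasserstein_barycenter_on_geodesic
    {d : ℕ} (P₁ P₂ : Measure (Eucl d))
    (hP₁ : MemP2 P₁) (hP₂ : MemP2 P₂)
    -- continuity: zero probability on every set of Hausdorff dimension `< d`
    (hcont₁ : ∀ s : Set (Eucl d), dimH s < d → P₁ s = 0)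
    (hcont₂ : ∀ s : Set (Eucl d), dimH s < d → P₂ s = 0)
    (lam : ℝ) (hlam : lam ∈ Set.Icc (0 : ℝ) 1)
    (πstar : Measure (Eucl d × Eucl d))
    (hπstar : IsCoupling πstar P₁ P₂)
    (hπopt : ∀ π : Measure (Eucl d × Eucl d), IsCoupling π P₁ P₂ →
      QuadCost πstar ≤ QuadCost π) :
    MemP2 (πstar.map (fun q : Eucl d × Eucl d => lam • q.1 + (1 - lam) • q.2)) ∧
    ∀ P : Measure (Eucl d), MemP2 P →
      ENNReal.ofReal lam *
          W2sq (πstar.map (fun q : Eucl d × Eucl d => lam • q.1 + (1 - lam) • q.2)) P₁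
        + ENNReal.ofReal (1 - lam) *
          W2sq (πstar.map (fun q : Eucl d × Eucl d => lam • q.1 + (1 - lam) • q.2)) P₂
      ≤ ENNReal.ofReal lam * W2sq P P₁ + ENNReal.ofReal (1 - lam) * W2sq P P₂ := by
  obtain ⟨hlam0, hlam1⟩ := hlam
  have h1lam0 : (0:ℝ) ≤ 1 - lam := by linarith
  haveI := hP₁.1
  haveI := hP₂.1
  haveI := hπstar.1
  set T : Eucl d × Eucl d → Eucl d := fun q => lam • q.1 + (1 - lam) • q.2 with hT
  have hTmeas : Measurable T :=
    (measurable_fst.const_smul lam).add (measurable_snd.const_smul (1 - lam))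
  set B := πstar.map T with hB
  haveI : IsProbabilityMeasure B := Measure.isProbabilityMeasure_map hTmeas.aemeasurable
  -- second moment of B
  have hmomB : ∫⁻ ξ, ENNReal.ofReal (‖ξ‖ ^ 2) ∂B < ⊤ := by
    have hmap : ∫⁻ ξ, ENNReal.ofReal (‖ξ‖ ^ 2) ∂B
        = ∫⁻ q, ENNReal.ofReal (‖T q‖ ^ 2) ∂πstar := by
      rw [hB]; exact lintegral_map ((measurable_norm.pow_const 2).ennreal_ofReal) hTmeas
    rw [hmap]
    refine lt_of_le_of_lt (lintegral_pair_bound hπstar fun q => ?_) ?_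
    · have h1 : ‖T q‖ ≤ ‖q.1‖ + ‖q.2‖ := by
        calc ‖T q‖ ≤ ‖lam • q.1‖ + ‖(1 - lam) • q.2‖ := norm_add_le _ _
          _ = |lam| * ‖q.1‖ + |1 - lam| * ‖q.2‖ := by
              rw [norm_smul, norm_smul, Real.norm_eq_abs, Real.norm_eq_abs]
          _ = lam * ‖q.1‖ + (1 - lam) * ‖q.2‖ := by
              rw [abs_of_nonneg hlam0, abs_of_nonneg h1lam0]
          _ ≤ ‖q.1‖ + ‖q.2‖ := by
              have := norm_nonneg q.1
              have := norm_nonneg q.2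
              nlinarith
      have h2 : ‖T q‖ ^ 2 ≤ 2 * ‖q.1‖ ^ 2 + 2 * ‖q.2‖ ^ 2 := by
        nlinarith [norm_nonneg (T q), norm_nonneg q.1, norm_nonneg q.2,
          sq_nonneg (‖q.1‖ - ‖q.2‖)]
      calc ENNReal.ofReal (‖T q‖ ^ 2)
          ≤ ENNReal.ofReal (2 * ‖q.1‖ ^ 2 + 2 * ‖q.2‖ ^ 2) := ENNReal.ofReal_le_ofReal h2
        _ = 2 * ENNReal.ofReal (‖q.1‖ ^ 2) + 2 * ENNReal.ofReal (‖q.2‖ ^ 2) := by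
            rw [ENNReal.ofReal_add (by positivity) (by positivity),
              ENNReal.ofReal_mul (by norm_num), ENNReal.ofReal_mul (by norm_num)]
            norm_num
    · exact ENNReal.add_lt_top.2 ⟨ENNReal.mul_lt_top ENNReal.ofNat_lt_top hP₁.2,
        ENNReal.mul_lt_top ENNReal.ofNat_lt_top hP₂.2⟩
  -- upper bound via explicit couplings
  have hρ₁ : IsCoupling (πstar.map (fun q => (T q, q.1))) B P₁ := by
    refine ⟨Measure.isProbabilityMeasure_map (hTmeas.prodMk measurable_fst).aemeasurable, ?_, ?_⟩
    · rw [Measure.map_map measurable_fst (hTmeas.prodMk measurable_fst)]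
      rfl
    · rw [Measure.map_map measurable_snd (hTmeas.prodMk measurable_fst)]
      exact hπstar.2.1
  have hρ₂ : IsCoupling (πstar.map (fun q => (T q, q.2))) B P₂ := by
    refine ⟨Measure.isProbabilityMeasure_map (hTmeas.prodMk measurable_snd).aemeasurable, ?_, ?_⟩
    · rw [Measure.map_map measurable_fst (hTmeas.prodMk measurable_snd)]
      rfl
    · rw [Measure.map_map measurable_snd (hTmeas.prodMk measurable_snd)]
      exact hπstar.2.2
  have hcost₁ : QuadCost (πstar.map (fun q => (T q, q.1)))
      = ENNReal.ofReal ((1 - lam) ^ 2) * QuadCost πstar := by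
    rw [QuadCost, lintegral_map meas_cost (hTmeas.prodMk measurable_fst), QuadCost,
      ← lintegral_const_mul _ meas_cost]
    refine lintegral_congr fun q => ?_
    have hvec : T q - q.1 = (1 - lam) • (q.2 - q.1) := by
      rw [hT]; simp only [smul_sub, sub_smul, one_smul]; abel
    rw [hvec, norm_smul, Real.norm_eq_abs, abs_of_nonneg h1lam0, mul_pow, norm_sub_rev,
      ENNReal.ofReal_mul (by positivity)]
  have hcost₂ : QuadCost (πstar.map (fun q => (T q, q.2)))
      = ENNReal.ofReal (lam ^ 2) * QuadCost πstar := by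
    rw [QuadCost, lintegral_map meas_cost (hTmeas.prodMk measurable_snd), QuadCost,
      ← lintegral_const_mul _ meas_cost]
    refine lintegral_congr fun q => ?_
    have hvec : T q - q.2 = lam • (q.1 - q.2) := by
      rw [hT]; simp only [smul_sub, sub_smul, one_smul]; abel
    rw [hvec, norm_smul, Real.norm_eq_abs, abs_of_nonneg hlam0, mul_pow,
      ENNReal.ofReal_mul (by positivity)]
  have hW₁ : W2sq B P₁ ≤ ENNReal.ofReal ((1 - lam) ^ 2) * QuadCost πstar := by
    rw [W2sq]
    exact le_trans (iInf_le_of_le (πstar.map (fun q => (T q, q.1))) (iInf_le _ hρ₁)) hcost₁.le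
  have hW₂ : W2sq B P₂ ≤ ENNReal.ofReal (lam ^ 2) * QuadCost πstar := by
    rw [W2sq]
    exact le_trans (iInf_le_of_le (πstar.map (fun q => (T q, q.2))) (iInf_le _ hρ₂)) hcost₂.le
  have hupper : ENNReal.ofReal lam * W2sq B P₁ + ENNReal.ofReal (1 - lam) * W2sq B P₂
      ≤ ENNReal.ofReal (lam * (1 - lam)) * QuadCost πstar := by
    calc ENNReal.ofReal lam * W2sq B P₁ + ENNReal.ofReal (1 - lam) * W2sq B P₂
        ≤ ENNReal.ofReal lam * (ENNReal.ofReal ((1 - lam) ^ 2) * QuadCost πstar)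
          + ENNReal.ofReal (1 - lam) * (ENNReal.ofReal (lam ^ 2) * QuadCost πstar) :=
          add_le_add (by gcongr) (by gcongr)
      _ = ENNReal.ofReal (lam * (1 - lam)) * QuadCost πstar := by
          rw [← mul_assoc, ← mul_assoc, ← ENNReal.ofReal_mul hlam0,
            ← ENNReal.ofReal_mul h1lam0, ← add_mul,
            ← ENNReal.ofReal_add (mul_nonneg hlam0 (sq_nonneg _))
              (mul_nonneg h1lam0 (sq_nonneg _))]
          have : lam * (1 - lam) ^ 2 + (1 - lam) * lam ^ 2 = lam * (1 - lam) := by ring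
          rw [this]
  -- lower bound via gluing
  have hlower : ∀ P : Measure (Eucl d), MemP2 P →
      ENNReal.ofReal (lam * (1 - lam)) * QuadCost πstar
        ≤ ENNReal.ofReal lam * W2sq P P₁ + ENNReal.ofReal (1 - lam) * W2sq P P₂ := by
    intro P hP
    haveI := hP.1
    have hW1 : W2sq P P₁
        = ⨅ γ : {π : Measure (Eucl d × Eucl d) // IsCoupling π P P₁}, QuadCost γ.1 := by
      rw [W2sq]
      refine le_antisymm (le_iInf fun γ => iInf_le_of_le γ.1 (iInf_le _ γ.2))
        (le_iInf fun π => le_iInf fun h => iInf_le (fun γ : {π : Measure (Eucl d × Eucl d) // IsCoupling π P P₁} => QuadCost γ.1) ⟨π, h⟩)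
    have hW2 : W2sq P P₂
        = ⨅ γ : {π : Measure (Eucl d × Eucl d) // IsCoupling π P P₂}, QuadCost γ.1 := by
      rw [W2sq]
      refine le_antisymm (le_iInf fun γ => iInf_le_of_le γ.1 (iInf_le _ γ.2))
        (le_iInf fun π => le_iInf fun h => iInf_le (fun γ : {π : Measure (Eucl d × Eucl d) // IsCoupling π P P₂} => QuadCost γ.1) ⟨π, h⟩)
    haveI : Nonempty {π : Measure (Eucl d × Eucl d) // IsCoupling π P P₁} :=
      ⟨⟨P.prod P₁, inferInstance, Measure.fst_prod, Measure.snd_prod⟩⟩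
    haveI : Nonempty {π : Measure (Eucl d × Eucl d) // IsCoupling π P P₂} :=
      ⟨⟨P.prod P₂, inferInstance, Measure.fst_prod, Measure.snd_prod⟩⟩
    rw [hW1, hW2]
    refine le_mul_iInf_add_mul_iInf ENNReal.ofReal_ne_top ENNReal.ofReal_ne_top ?_
    rintro ⟨γ₁, hγ₁⟩ ⟨γ₂, hγ₂⟩
    obtain ⟨μ, hμprob, hmap₁, hmap₂⟩ := glue γ₁ γ₂ hγ₁ hγ₂
    haveI := hμprob
    have hνc : IsCoupling (μ.map (fun p => p.2)) P₁ P₂ := by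
      refine ⟨Measure.isProbabilityMeasure_map measurable_snd.aemeasurable, ?_, ?_⟩
      · have e1 : (Prod.fst ∘ fun p : Eucl d × Eucl d × Eucl d => p.2)
            = fun p : Eucl d × Eucl d × Eucl d => p.2.1 := rfl
        have e2 : (Prod.snd ∘ fun p : Eucl d × Eucl d × Eucl d => (p.1, p.2.1))
            = fun p : Eucl d × Eucl d × Eucl d => p.2.1 := rfl
        rw [Measure.map_map measurable_fst measurable_snd, e1, ← hγ₁.2.2, ← hmap₁,
          Measure.map_map measurable_snd (measurable_fst.prodMk measurable_snd.fst), e2]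
      · have e1 : (Prod.snd ∘ fun p : Eucl d × Eucl d × Eucl d => p.2)
            = fun p : Eucl d × Eucl d × Eucl d => p.2.2 := rfl
        have e2 : (Prod.snd ∘ fun p : Eucl d × Eucl d × Eucl d => (p.1, p.2.2))
            = fun p : Eucl d × Eucl d × Eucl d => p.2.2 := rfl
        rw [Measure.map_map measurable_snd measurable_snd, e1, ← hγ₂.2.2, ← hmap₂,
          Measure.map_map measurable_snd (measurable_fst.prodMk measurable_snd.snd), e2]
    have m₁ : Measurable (fun p : Eucl d × Eucl d × Eucl d =>
        ENNReal.ofReal (‖p.1 - p.2.1‖ ^ 2)) :=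
      (((measurable_fst.sub (measurable_fst.comp measurable_snd)).norm).pow_const 2).ennreal_ofReal
    have m₂ : Measurable (fun p : Eucl d × Eucl d × Eucl d =>
        ENNReal.ofReal (‖p.1 - p.2.2‖ ^ 2)) :=
      (((measurable_fst.sub (measurable_snd.comp measurable_snd)).norm).pow_const 2).ennreal_ofReal
    have m₀ : Measurable (fun p : Eucl d × Eucl d × Eucl d =>
        ENNReal.ofReal (‖p.2.1 - p.2.2‖ ^ 2)) :=
      ((((measurable_fst.comp measurable_snd).sub
        (measurable_snd.comp measurable_snd)).norm).pow_const 2).ennreal_ofReal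
    have hQν : QuadCost (μ.map (fun p => p.2))
        = ∫⁻ p, ENNReal.ofReal (‖p.2.1 - p.2.2‖ ^ 2) ∂μ := by
      rw [QuadCost, lintegral_map meas_cost measurable_snd]
    have hQ₁ : QuadCost γ₁ = ∫⁻ p, ENNReal.ofReal (‖p.1 - p.2.1‖ ^ 2) ∂μ := by
      rw [QuadCost, ← hmap₁,
        lintegral_map meas_cost (measurable_fst.prodMk measurable_snd.fst)]
    have hQ₂ : QuadCost γ₂ = ∫⁻ p, ENNReal.ofReal (‖p.1 - p.2.2‖ ^ 2) ∂μ := by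
      rw [QuadCost, ← hmap₂,
        lintegral_map meas_cost (measurable_fst.prodMk measurable_snd.snd)]
    calc ENNReal.ofReal (lam * (1 - lam)) * QuadCost πstar
        ≤ ENNReal.ofReal (lam * (1 - lam)) * QuadCost (μ.map (fun p => p.2)) :=
          by gcongr; exact hπopt _ hνc
      _ = ∫⁻ p, ENNReal.ofReal (lam * (1 - lam))
            * ENNReal.ofReal (‖p.2.1 - p.2.2‖ ^ 2) ∂μ := by
          rw [hQν, ← lintegral_const_mul _ m₀]
      _ ≤ ∫⁻ p, (ENNReal.ofReal lam * ENNReal.ofReal (‖p.1 - p.2.1‖ ^ 2)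
            + ENNReal.ofReal (1 - lam) * ENNReal.ofReal (‖p.1 - p.2.2‖ ^ 2)) ∂μ := by
          refine lintegral_mono fun p => ?_
          rw [← ENNReal.ofReal_mul (mul_nonneg hlam0 h1lam0), ← ENNReal.ofReal_mul hlam0,
            ← ENNReal.ofReal_mul h1lam0,
            ← ENNReal.ofReal_add (mul_nonneg hlam0 (sq_nonneg _))
              (mul_nonneg h1lam0 (sq_nonneg _))]
          exact ENNReal.ofReal_le_ofReal (point_ineq hlam0 hlam1 p.1 p.2.1 p.2.2)
      _ = ENNReal.ofReal lam * QuadCost γ₁ + ENNReal.ofReal (1 - lam) * QuadCost γ₂ := by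
          rw [lintegral_add_left (m₁.const_mul _), lintegral_const_mul _ m₁,
            lintegral_const_mul _ m₂, hQ₁, hQ₂]
  exact ⟨⟨inferInstance, hmomB⟩, fun P hP => le_trans hupper (hlower P hP)⟩

end
end

section
/- Let λ_1,…,λ_K > 0 with Σ_k λ_k = 1 and P_1,…,P_K ∈ 𝒫_2(ℝ^d). Define φ(ξ_1,…,ξ_K) = min over ξ ∈ ℝ^d of Σ_k λ_k‖ξ−ξ_k‖²₂ and Φ(ξ_1,…,ξ_K) = Σ_k λ_k ξ_k (the unique minimizer). Then for every multi-margin transportation plan π ∈ Π(P_1,…,P_K): Var_M(ξ) = E_π[φ(ξ_1,…,ξ_K)] + Var_{Φ_#π}(ξ), where M = Σ_k λ_k P_k is the mixture distribution. Consequently, a plan π* ∈ Π(P_1,…,P_K) minimizes E_π[φ] over Π(P_1,…,P_K) if and only if it maximizes Var_{Φ_#π}(ξ) over Π(P_1,…,P_K). -/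
open MeasureTheory ENNReal Set

noncomputable section

/-- `π ∈ Π(P_1,…,P_K)`: a multi-margin transportation plan with marginals `P k`. -/
def IsMultiCoupling {X : Type*} [MeasurableSpace X] {K : ℕ}
    (π : Measure (Fin K → X)) (P : Fin K → Measure X) : Prop :=
  IsProbabilityMeasure π ∧ ∀ k, π.map (fun x => x k) = P k

/-- `Var_P(ξ) = E_P[‖ξ − E_P[ξ]‖₂²]`. -/
def eVar {d : ℕ} (P : Measure (Eucl d)) : ℝ≥0∞ :=
  ∫⁻ ξ, ENNReal.ofReal (‖ξ - ∫ x, x ∂P‖ ^ 2) ∂P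

/-- `φ(ξ₁,…,ξ_K) = min_{ξ ∈ ℝ^d} ∑ k, λ_k ‖ξ − ξ_k‖₂²`. -/
def phiMin {d K : ℕ} (lam : Fin K → ℝ) (x : Fin K → Eucl d) : ℝ :=
  sInf (Set.range fun ξ : Eucl d => ∑ k, lam k * ‖ξ - x k‖ ^ 2)

/-- Key algebraic identity. -/
lemma key_identity {d K : ℕ} (lam : Fin K → ℝ) (hlam_sum : ∑ k, lam k = 1)
    (x : Fin K → Eucl d) (ξ : Eucl d) :
    ∑ k, lam k * ‖ξ - x k‖ ^ 2
      = ‖ξ - ∑ k', lam k' • x k'‖ ^ 2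
        + ∑ k, lam k * ‖(∑ k', lam k' • x k') - x k‖ ^ 2 := by
  set m : Eucl d := ∑ k', lam k' • x k' with hm
  have hzero : ∑ k, lam k • (m - x k) = (0 : Eucl d) := by
    simp only [smul_sub, Finset.sum_sub_distrib, ← Finset.sum_smul, hlam_sum, one_smul]
    simp [hm]
  have h1 : ∀ k, ‖ξ - x k‖ ^ 2
      = ‖ξ - m‖ ^ 2 + 2 * (inner ℝ (ξ - m) (m - x k) : ℝ) + ‖m - x k‖ ^ 2 := by
    intro k
    have h := norm_add_sq_real (ξ - m) (m - x k)
    have : ξ - x k = (ξ - m) + (m - x k) := by abel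
    rw [this, h]
  calc ∑ k, lam k * ‖ξ - x k‖ ^ 2
      = ∑ k, (lam k * ‖ξ - m‖ ^ 2 + (2 * (inner ℝ (ξ - m) (lam k • (m - x k)) : ℝ)
          + lam k * ‖m - x k‖ ^ 2)) := by
        refine Finset.sum_congr rfl fun k _ => ?_
        rw [h1 k, real_inner_smul_right]; ring
    _ = ‖ξ - m‖ ^ 2 + ∑ k, lam k * ‖m - x k‖ ^ 2 := by
        rw [Finset.sum_add_distrib, Finset.sum_add_distrib, ← Finset.sum_mul,
          hlam_sum, ← Finset.mul_sum, ← inner_sum, hzero, inner_zero_right]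
        ring

/-- The infimum defining `phiMin` is attained at the barycenter. -/
lemma phiMin_eq {d K : ℕ} (lam : Fin K → ℝ) (hlam_sum : ∑ k, lam k = 1)
    (x : Fin K → Eucl d) :
    phiMin lam x = ∑ k, lam k * ‖(∑ k', lam k' • x k') - x k‖ ^ 2 := by
  set m : Eucl d := ∑ k', lam k' • x k' with hm
  have hle : ∀ ξ : Eucl d, ∑ k, lam k * ‖m - x k‖ ^ 2 ≤ ∑ k, lam k * ‖ξ - x k‖ ^ 2 := by
    intro ξ
    rw [key_identity lam hlam_sum x ξ]
    nlinarith [sq_nonneg ‖ξ - m‖]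
  have hmem : (∑ k, lam k * ‖m - x k‖ ^ 2) ∈
      Set.range fun ξ : Eucl d => ∑ k, lam k * ‖ξ - x k‖ ^ 2 := ⟨m, rfl⟩
  exact le_antisymm (csInf_le ⟨_, by rintro _ ⟨ξ, rfl⟩; exact hle ξ⟩ hmem)
    (le_csInf ⟨_, hmem⟩ (by rintro _ ⟨ξ, rfl⟩; exact hle ξ))

lemma integrable_id_of_p2 {d : ℕ} (P : Measure (Eucl d)) [IsProbabilityMeasure P]
    (h2 : ∫⁻ ξ, ENNReal.ofReal (‖ξ‖ ^ 2) ∂P < ⊤) :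
    Integrable (fun ξ : Eucl d => ξ) P := by
  refine ⟨aestronglyMeasurable_id, ?_⟩
  rw [HasFiniteIntegral]
  calc ∫⁻ ξ, (‖ξ‖₊ : ℝ≥0∞) ∂P ≤ ∫⁻ ξ, 1 + ENNReal.ofReal (‖ξ‖ ^ 2) ∂P := by
        refine lintegral_mono fun ξ => ?_
        rw [← enorm_eq_nnnorm, ← ofReal_norm_eq_enorm, ← ENNReal.ofReal_one,
          ← ENNReal.ofReal_add zero_le_one (by positivity)]
        exact ENNReal.ofReal_le_ofReal (by nlinarith [norm_nonneg ξ, sq_nonneg (‖ξ‖ - 1)])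
    _ = 1 + ∫⁻ ξ, ENNReal.ofReal (‖ξ‖ ^ 2) ∂P := by
        rw [lintegral_add_left measurable_const]; simp
    _ < ⊤ := ENNReal.add_lt_top.2 ⟨ENNReal.one_lt_top, h2⟩

/-- Total variance decomposition for a single coupling. -/
lemma part2 {d K : ℕ} (lam : Fin K → ℝ) (hlam_pos : ∀ k, 0 < lam k)
    (hlam_sum : ∑ k, lam k = 1)
    (P : Fin K → Measure (Eucl d)) (hP : ∀ k, MemP2 (P k))
    (π : Measure (Fin K → Eucl d)) (hπ : IsMultiCoupling π P) :
    eVar (∑ k, ENNReal.ofReal (lam k) • P k)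
      = (∫⁻ x, ENNReal.ofReal (phiMin lam x) ∂π)
        + eVar (π.map fun x : Fin K → Eucl d => ∑ k, lam k • x k) := by
  have hlam_nn : ∀ k, (0:ℝ) ≤ lam k := fun k => (hlam_pos k).le
  haveI : ∀ k, IsProbabilityMeasure (P k) := fun k => (hP k).1
  haveI : IsProbabilityMeasure π := hπ.1
  set Φ : (Fin K → Eucl d) → Eucl d := fun x => ∑ k, lam k • x k with hΦ
  have hΦmeas : Measurable Φ :=
    Finset.measurable_sum _ fun k _ => (measurable_pi_apply k).const_smul (lam k)
  set M : Measure (Eucl d) := ∑ k, ENNReal.ofReal (lam k) • P k with hM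
  have hint : ∀ k, Integrable (fun ξ : Eucl d => ξ) (P k) :=
    fun k => integrable_id_of_p2 (P k) (hP k).2
  have hintk : ∀ k, Integrable (fun x : Fin K → Eucl d => x k) π := by
    intro k
    have h2 : Integrable (fun ξ : Eucl d => ξ) (π.map fun x => x k) := by
      rw [hπ.2 k]; exact hint k
    exact (integrable_map_measure aestronglyMeasurable_id
      (measurable_pi_apply k).aemeasurable).mp h2
  set μ : Eucl d := ∑ k, lam k • ∫ ξ, ξ ∂(P k) with hμ
  -- mean of the mixture
  have hmeanM : (∫ x, x ∂M) = μ := by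
    rw [hM, integral_finset_sum_measure (fun k _ => (hint k).smul_measure ofReal_ne_top)]
    refine Finset.sum_congr rfl fun k _ => ?_
    rw [integral_smul_measure, ENNReal.toReal_ofReal (hlam_nn k)]
  -- mean of the pushforward
  have hcoordmean : ∀ k, (∫ x, x k ∂π) = ∫ ξ, ξ ∂(P k) := by
    intro k
    rw [← hπ.2 k]
    exact (integral_map (μ := π) (φ := fun x : Fin K → Eucl d => x k)
      (f := fun ξ : Eucl d => ξ)
      (measurable_pi_apply k).aemeasurable aestronglyMeasurable_id).symm
  have hmapmean : (∫ ξ, ξ ∂(π.map Φ)) = μ := by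
    have h0 : (∫ ξ, ξ ∂(π.map Φ)) = ∫ x, Φ x ∂π :=
      integral_map (f := fun ξ : Eucl d => ξ) hΦmeas.aemeasurable aestronglyMeasurable_id
    rw [h0]
    simp only [hΦ]
    rw [integral_finset_sum (f := fun k (x : Fin K → Eucl d) => lam k • x k)
      Finset.univ (fun k _ => (hintk k).smul (lam k))]
    refine Finset.sum_congr rfl fun k _ => ?_
    rw [integral_smul, hcoordmean k]
  -- the integrand
  set g : Eucl d → ℝ≥0∞ := fun ξ => ENNReal.ofReal (‖ξ - μ‖ ^ 2) with hg
  have hgmeas : Measurable g :=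
    (((measurable_id.sub_const μ).norm.pow_const 2)).ennreal_ofReal
  -- pointwise identity
  have hpt : ∀ x : Fin K → Eucl d,
      ∑ k, ENNReal.ofReal (lam k) * g (x k)
        = ENNReal.ofReal (phiMin lam x) + g (Φ x) := by
    intro x
    have hreal : ∑ k, lam k * ‖x k - μ‖ ^ 2 = phiMin lam x + ‖Φ x - μ‖ ^ 2 := by
      have h := key_identity lam hlam_sum x μ
      rw [phiMin_eq lam hlam_sum x]
      calc ∑ k, lam k * ‖x k - μ‖ ^ 2 = ∑ k, lam k * ‖μ - x k‖ ^ 2 := by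
            simp [norm_sub_rev]
        _ = ‖μ - Φ x‖ ^ 2 + ∑ k, lam k * ‖Φ x - x k‖ ^ 2 := h
        _ = (∑ k, lam k * ‖(∑ k', lam k' • x k') - x k‖ ^ 2) + ‖Φ x - μ‖ ^ 2 := by
            rw [norm_sub_rev]; ring_nf; rfl
    have h1 : ∑ k, ENNReal.ofReal (lam k) * g (x k)
        = ENNReal.ofReal (∑ k, lam k * ‖x k - μ‖ ^ 2) := by
      rw [ENNReal.ofReal_sum_of_nonneg (fun k _ => mul_nonneg (hlam_nn k) (by positivity))]
      exact Finset.sum_congr rfl fun k _ => (ENNReal.ofReal_mul (hlam_nn k)).symm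
    have hφnn : (0:ℝ) ≤ phiMin lam x := by
      rw [phiMin_eq lam hlam_sum x]
      exact Finset.sum_nonneg fun k _ => mul_nonneg (hlam_nn k) (by positivity)
    rw [h1, hreal, ENNReal.ofReal_add hφnn (by positivity)]
  -- measurability of phiMin
  have hφeq : (fun x : Fin K → Eucl d => phiMin lam x)
      = fun x => ∑ k, lam k * ‖(∑ k', lam k' • x k') - x k‖ ^ 2 :=
    funext (phiMin_eq lam hlam_sum)
  have hφmeas : Measurable fun x : Fin K → Eucl d => ENNReal.ofReal (phiMin lam x) := by
    simp only [phiMin_eq lam hlam_sum]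
    exact (Finset.measurable_sum _ fun k _ =>
      (((hΦmeas.sub (measurable_pi_apply k)).norm.pow_const 2).const_mul
        (lam k))).ennreal_ofReal
  have hgk : ∀ k : Fin K, Measurable fun x : Fin K → Eucl d => g (x k) :=
    fun k => hgmeas.comp (measurable_pi_apply k)
  -- main computation
  have step1 : eVar M = ∫⁻ x, ∑ k, ENNReal.ofReal (lam k) * g (x k) ∂π := by
    rw [eVar, hmeanM]
    rw [show (∫⁻ ξ, ENNReal.ofReal (‖ξ - μ‖ ^ 2) ∂M) = ∫⁻ ξ, g ξ ∂M from rfl]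
    rw [hM, lintegral_finset_sum_measure]
    rw [lintegral_finset_sum' _ (fun k _ =>
      ((hgk k).const_mul (ENNReal.ofReal (lam k))).aemeasurable)]
    refine Finset.sum_congr rfl fun k _ => ?_
    rw [lintegral_smul_measure, ← hπ.2 k, lintegral_map hgmeas (measurable_pi_apply k),
      lintegral_const_mul _ (hgk k), smul_eq_mul]
  calc eVar M = ∫⁻ x, ∑ k, ENNReal.ofReal (lam k) * g (x k) ∂π := step1
    _ = ∫⁻ x, ENNReal.ofReal (phiMin lam x) + g (Φ x) ∂π := by
        exact lintegral_congr fun x => hpt x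
    _ = (∫⁻ x, ENNReal.ofReal (phiMin lam x) ∂π) + ∫⁻ x, g (Φ x) ∂π :=
        lintegral_add_left hφmeas _
    _ = (∫⁻ x, ENNReal.ofReal (phiMin lam x) ∂π) + eVar (π.map Φ) := by
        rw [eVar, hmapmean, lintegral_map hgmeas hΦmeas]

/-- **total variance decomposition for multi-margin plans.** -/
theorem total_variance_decomposition
    {d K : ℕ} (lam : Fin K → ℝ) (hlam_pos : ∀ k, 0 < lam k)
    (hlam_sum : ∑ k, lam k = 1)
    (P : Fin K → Measure (Eucl d)) (hP : ∀ k, MemP2 (P k)) :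
    -- `Φ(ξ₁,…,ξ_K) = ∑ k, λ_k ξ_k` is the unique minimizer defining `φ`:
    (∀ x : Fin K → Eucl d,
      (∑ k, lam k * ‖(∑ k', lam k' • x k') - x k‖ ^ 2 = phiMin lam x) ∧
      ∀ ξ : Eucl d, (∑ k, lam k * ‖ξ - x k‖ ^ 2 = phiMin lam x) →
        ξ = ∑ k', lam k' • x k') ∧
    -- the total variance decomposition:
    (∀ π : Measure (Fin K → Eucl d), IsMultiCoupling π P →
      eVar (∑ k, ENNReal.ofReal (lam k) • P k)
        = (∫⁻ x, ENNReal.ofReal (phiMin lam x) ∂π)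
          + eVar (π.map fun x : Fin K → Eucl d => ∑ k, lam k • x k)) ∧
    -- consequently, `π*` minimizes `E_π[φ]` iff it maximizes the variance of `Φ_#π`:
    (∀ πstar : Measure (Fin K → Eucl d), IsMultiCoupling πstar P →
      ((∀ π : Measure (Fin K → Eucl d), IsMultiCoupling π P →
          ∫⁻ x, ENNReal.ofReal (phiMin lam x) ∂πstar
            ≤ ∫⁻ x, ENNReal.ofReal (phiMin lam x) ∂π)
        ↔ (∀ π : Measure (Fin K → Eucl d), IsMultiCoupling π P →
            eVar (π.map fun x : Fin K → Eucl d => ∑ k, lam k • x k)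
              ≤ eVar (πstar.map fun x : Fin K → Eucl d => ∑ k, lam k • x k)))) := by
  have hlam_nn : ∀ k, (0:ℝ) ≤ lam k := fun k => (hlam_pos k).le
  haveI : ∀ k, IsProbabilityMeasure (P k) := fun k => (hP k).1
  refine ⟨?_, fun π hπ => part2 lam hlam_pos hlam_sum P hP π hπ, ?_⟩
  · intro x
    constructor
    · exact (phiMin_eq lam hlam_sum x).symm
    · intro ξ hξ
      have h := key_identity lam hlam_sum x ξ
      rw [hξ, phiMin_eq lam hlam_sum x] at h
      have : ‖ξ - ∑ k', lam k' • x k'‖ ^ 2 = 0 := by linarith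
      have h2 : ξ - ∑ k', lam k' • x k' = 0 := by
        have := pow_eq_zero_iff (n := 2) (by norm_num) |>.mp this
        exact norm_eq_zero.mp this
      have := sub_eq_zero.mp h2
      exact this
  · -- part 3
    intro πstar hπstar
    set M : Measure (Eucl d) := ∑ k, ENNReal.ofReal (lam k) • P k with hM
    -- finiteness of eVar M
    have hMuniv : M Set.univ = 1 := by
      rw [hM]
      simp only [Measure.coe_finset_sum, Finset.sum_apply, Measure.smul_apply,
        measure_univ, smul_eq_mul, mul_one]
      rw [← ENNReal.ofReal_sum_of_nonneg (fun k _ => hlam_nn k), hlam_sum,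
        ENNReal.ofReal_one]
    have h2M : ∫⁻ ξ, ENNReal.ofReal (‖ξ‖ ^ 2) ∂M < ⊤ := by
      rw [hM, lintegral_finset_sum_measure]
      refine ENNReal.sum_lt_top.mpr fun k _ => ?_
      rw [lintegral_smul_measure]
      exact ENNReal.mul_lt_top ofReal_lt_top (hP k).2
    have hfin : eVar M ≠ ⊤ := by
      set c : Eucl d := ∫ x, x ∂M with hc
      have hb : eVar M ≤ ∫⁻ ξ, 2 * ENNReal.ofReal (‖ξ‖ ^ 2)
          + ENNReal.ofReal (2 * ‖c‖ ^ 2) ∂M := by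
        refine lintegral_mono fun ξ => ?_
        have h1 : ‖ξ - ∫ x, x ∂M‖ ^ 2 ≤ 2 * ‖ξ‖ ^ 2 + 2 * ‖c‖ ^ 2 := by
          have h := norm_sub_le ξ c
          have hcc : (∫ x, x ∂M) = c := rfl
          rw [hcc]
          have h2 := pow_le_pow_left₀ (norm_nonneg (ξ - c)) h 2
          nlinarith [h2, sq_nonneg (‖ξ‖ - ‖c‖)]
        calc ENNReal.ofReal (‖ξ - ∫ x, x ∂M‖ ^ 2)
            ≤ ENNReal.ofReal (2 * ‖ξ‖ ^ 2 + 2 * ‖c‖ ^ 2) := ENNReal.ofReal_le_ofReal h1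
          _ = 2 * ENNReal.ofReal (‖ξ‖ ^ 2) + ENNReal.ofReal (2 * ‖c‖ ^ 2) := by
              rw [ENNReal.ofReal_add (by positivity) (by positivity),
                ENNReal.ofReal_mul (by norm_num : (0:ℝ) ≤ 2)]
              norm_num
      have : (∫⁻ ξ, 2 * ENNReal.ofReal (‖ξ‖ ^ 2)
          + ENNReal.ofReal (2 * ‖c‖ ^ 2) ∂M) < ⊤ := by
        rw [lintegral_add_left ((measurable_norm.pow_const 2).ennreal_ofReal.const_mul 2),
          lintegral_const, hMuniv, mul_one, lintegral_const_mul _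
            (measurable_norm.pow_const 2).ennreal_ofReal]
        exact ENNReal.add_lt_top.2 ⟨ENNReal.mul_lt_top (by norm_num) h2M, ofReal_lt_top⟩
      exact (lt_of_le_of_lt hb this).ne
    -- abbreviations
    set A : Measure (Fin K → Eucl d) → ℝ≥0∞ :=
      fun π => ∫⁻ x, ENNReal.ofReal (phiMin lam x) ∂π with hA
    set B : Measure (Fin K → Eucl d) → ℝ≥0∞ :=
      fun π => eVar (π.map fun x : Fin K → Eucl d => ∑ k, lam k • x k) with hB
    have hdecomp : ∀ π : Measure (Fin K → Eucl d), IsMultiCoupling π P →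
        A π + B π = eVar M := fun π hπ => (part2 lam hlam_pos hlam_sum P hP π hπ).symm
    have hAfin : ∀ π : Measure (Fin K → Eucl d), IsMultiCoupling π P → A π ≠ ⊤ := by
      intro π hπ
      refine ne_top_of_le_ne_top hfin ?_
      rw [← hdecomp π hπ]; exact le_self_add
    have hBfin : ∀ π : Measure (Fin K → Eucl d), IsMultiCoupling π P → B π ≠ ⊤ := by
      intro π hπ
      refine ne_top_of_le_ne_top hfin ?_
      rw [← hdecomp π hπ]; exact le_add_self
    constructor
    · intro h π hπ
      have h1 : A πstar + B π ≤ A πstar + B πstar := by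
        calc A πstar + B π ≤ A π + B π := add_le_add_left (h π hπ) _
          _ = eVar M := hdecomp π hπ
          _ = A πstar + B πstar := (hdecomp πstar hπstar).symm
      exact (ENNReal.add_le_add_iff_left (hAfin πstar hπstar)).mp h1
    · intro h π hπ
      have h1 : A πstar + B πstar ≤ A π + B πstar := by
        calc A πstar + B πstar = eVar M := hdecomp πstar hπstar
          _ = A π + B π := (hdecomp π hπ).symm
          _ ≤ A π + B πstar := add_le_add_right (h π hπ) _
      exact (ENNReal.add_le_add_iff_right (hBfin πstar hπstar)).mp h1

end
end
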